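/- arXiv:1306.6511 — 2 statements merged into one kernel-verified Lean document; each statement's English description precedes it below -/
import Mathlib

section
/- Let s be even and t odd integers. Then ν₂({n}_{s,t}) = ν₂(s·n/2) if n is even, and ν₂({n}_{s,t}) = 0 if n is odd. -/
/-- Generalized Fibonacci polynomials: {0}=0, {1}=1, {n}=s{n-1}+t{n-2}. -/
def gfib {R : Type*} [CommRing R] (s t : R) : ℕ → R
  | 0 => 0
  | 1 => 1
  | n + 2 => s * gfib s t (n + 1) + t * gfib s t n

/-- Generalized Lucas polynomials: ⟨0⟩=2, ⟨1⟩=s, ⟨n⟩=s⟨n-1⟩+t⟨n-2⟩. -/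
def gluc {R : Type*} [CommRing R] (s t : R) : ℕ → R
  | 0 => 2
  | 1 => s
  | n + 2 => s * gluc s t (n + 1) + t * gluc s t n

lemma gfib_step {R : Type*} [CommRing R] (s t : R) (n : ℕ) :
    gfib s t (n + 2) = s * gfib s t (n + 1) + t * gfib s t n := rfl

lemma gfib_parity (s t : ℤ) (hs : Even s) (ht : Odd t) :
    ∀ n, Odd (gfib s t (2 * n + 1)) ∧ Even (gfib s t (2 * n)) := by
  intro n
  induction n with
  | zero => exact ⟨⟨0, by norm_num [gfib]⟩, ⟨0, by norm_num [gfib]⟩⟩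
  | succ m ih =>
    obtain ⟨h1, h2⟩ := ih
    have e1 : gfib s t (2 * (m + 1)) = s * gfib s t (2 * m + 1) + t * gfib s t (2 * m) := by
      have : 2 * (m + 1) = (2 * m) + 2 := by ring
      rw [this, gfib_step]
    have e2 : gfib s t (2 * (m + 1) + 1)
        = s * gfib s t (2 * (m + 1)) + t * gfib s t (2 * m + 1) := by
      have : 2 * (m + 1) + 1 = (2 * m + 1) + 2 := by ring
      rw [this, gfib_step, show 2 * m + 1 + 1 = 2 * (m + 1) from by omega]
    have heven : Even (gfib s t (2 * (m + 1))) := by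
      rw [e1]
      exact (hs.mul_right _).add (h2.mul_left _)
    refine ⟨?_, heven⟩
    rw [e2]
    exact ((hs.mul_right _).add_odd (ht.mul h1))

lemma gfib_add {R : Type*} [CommRing R] (s t : R) (m n : ℕ) :
    gfib s t (m + n + 1)
      = gfib s t (m + 1) * gfib s t (n + 1) + t * gfib s t m * gfib s t n := by
  induction m using Nat.twoStepInduction with
  | zero => simp [gfib]
  | one =>
    have : 1 + n + 1 = n + 2 := by ring
    rw [this, gfib_step]
    simp [gfib]
  | more m ih1 ih2 =>
    have h3 : gfib s t (m + 2 + 1) = s * gfib s t (m + 1 + 1) + t * gfib s t (m + 1) := by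
      rw [show m + 2 + 1 = (m + 1) + 2 from by omega]
      exact gfib_step s t (m + 1)
    have h4 : gfib s t (m + 2) = s * gfib s t (m + 1) + t * gfib s t m := gfib_step s t m
    have h5 : gfib s t (m + 2 + n + 1) = s * gfib s t (m + 1 + n + 1) + t * gfib s t (m + n + 1) := by
      rw [show m + 2 + n + 1 = (m + n + 1) + 2 from by omega, gfib_step,
        show m + n + 1 + 1 = m + 1 + n + 1 from by omega]
    rw [h5, ih2, ih1, h3, h4]
    ring

/-- key lemma: `gfib s t (2k)` equals `s·k` times a 2-adic unit. -/
lemma gfib_key (s t : ℤ) (hs : Even s) (ht : Odd t) :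
    ∀ k : ℕ, ∃ a b : ℤ, Odd a ∧ Odd b ∧ b * gfib s t (2 * k) = s * k * a := by
  intro k
  induction k using Nat.strong_induction_on with
  | _ k IH =>
    match k with
    | 0 => exact ⟨1, 1, odd_one, odd_one, by simp [gfib]⟩
    | (j + 1) =>
      -- gfib (2(j+1)) = gfib (j+1) * L where L = s * gfib(j+1) + 2t * gfib j
      have hprod : gfib s t (2 * (j + 1))
          = gfib s t (j + 1) * (s * gfib s t (j + 1) + 2 * t * gfib s t j) := by
        have e : 2 * (j + 1) = j + (j + 1) + 1 := by ring
        rw [e, gfib_add]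
        have : gfib s t (j + 1 + 1) = s * gfib s t (j + 1) + t * gfib s t j := gfib_step s t j
        rw [this]
        ring
      rcases Nat.even_or_odd j with hj | hj
      · -- j = 2i, k = 2i+1 odd
        obtain ⟨i, hi⟩ := hj
        have hij : j = 2 * i := by omega
        subst hij
        obtain ⟨a, b, ha, hb, hab⟩ := IH i (by omega)
        have hodd1 : Odd (gfib s t (2 * i + 1)) := (gfib_parity s t hs ht i).1
        refine ⟨gfib s t (2 * i + 1) * (b * gfib s t (2 * i + 1) + 2 * t * (i : ℤ) * a),
          (2 * (i : ℤ) + 1) * b, ?_, ?_, ?_⟩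
        · exact hodd1.mul ((hb.mul hodd1).add_even ⟨t * i * a, by ring⟩)
        · have hodd2 : Odd (2 * (i : ℤ) + 1) := ⟨i, by ring⟩
          exact hodd2.mul hb
        · have : b * gfib s t (2 * (2 * i + 1))
              = gfib s t (2 * i + 1) * (s * (b * gfib s t (2 * i + 1)) + 2 * t * (b * gfib s t (2 * i))) := by
            rw [hprod]; ring
          rw [hab] at this
          push_cast
          calc (2 * (i : ℤ) + 1) * b * gfib s t (2 * (2 * i + 1))
              = (2 * (i : ℤ) + 1) * (b * gfib s t (2 * (2 * i + 1))) := by ring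
            _ = (2 * (i : ℤ) + 1) * (gfib s t (2 * i + 1) * (s * (b * gfib s t (2 * i + 1)) + 2 * t * (s * i * a))) := by rw [this]
            _ = s * (2 * (i : ℤ) + 1) * (gfib s t (2 * i + 1) * (b * gfib s t (2 * i + 1) + 2 * t * (i : ℤ) * a)) := by ring
      · -- j = 2i+1, k = 2(i+1)
        obtain ⟨i, hi⟩ := hj
        subst hi
        obtain ⟨a, b, ha, hb, hab⟩ := IH (i + 1) (by omega)
        have hodd1 : Odd (gfib s t (2 * i + 1)) := (gfib_parity s t hs ht i).1
        obtain ⟨u, hu⟩ := id hs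
        obtain ⟨e, he⟩ := (gfib_parity s t hs ht (i + 1)).2
        -- L = s * gfib(2i+2) + 2t * gfib(2i+1) = 2 * (2ue + t * gfib(2i+1))
        have hL : s * gfib s t (2 * i + 1 + 1) + 2 * t * gfib s t (2 * i + 1)
            = 2 * (2 * u * e + t * gfib s t (2 * i + 1)) := by
          have h1 : gfib s t (2 * i + 1 + 1) = gfib s t (2 * (i + 1)) := by rw [show 2 * i + 1 + 1 = 2 * (i + 1) from by omega]
          rw [h1, he, hu]; ring
        have hw : Odd (2 * u * e + t * gfib s t (2 * i + 1)) :=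
          Even.add_odd ⟨u * e, by ring⟩ (ht.mul hodd1)
        refine ⟨a * (2 * u * e + t * gfib s t (2 * i + 1)), b, ha.mul hw, hb, ?_⟩
        have h2 : gfib s t (2 * i + 1 + 1) = gfib s t (2 * (i + 1)) := by rw [show 2 * i + 1 + 1 = 2 * (i + 1) from by omega]
        have : b * gfib s t (2 * (2 * i + 1 + 1))
            = (b * gfib s t (2 * (i + 1))) * (2 * (2 * u * e + t * gfib s t (2 * i + 1))) := by
          rw [hprod, ← hL, h2]; ring
        rw [hab] at this
        rw [this]
        push_cast
        ring

lemma odd_not_two_dvd {a : ℤ} (ha : Odd a) : ¬ (2 : ℤ) ∣ a := by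
  obtain ⟨c, hc⟩ := ha
  omega

theorem stmt13 (s t : ℤ) (hs : Even s) (ht : Odd t) (n : ℕ) :
    (Even n → padicValInt 2 (gfib s t n) = padicValInt 2 (s * n / 2)) ∧
    (Odd n → padicValInt 2 (gfib s t n) = 0) := by
  constructor
  · intro hn
    obtain ⟨k, hk⟩ := hn
    have hn2 : n = 2 * k := by omega
    subst hn2
    have hdiv : s * (↑(2 * k) : ℤ) / 2 = s * k := by
      push_cast
      rw [show s * (2 * (k : ℤ)) = 2 * (s * k) by ring]
      exact Int.mul_ediv_cancel_left _ two_ne_zero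
    rw [hdiv]
    obtain ⟨a, b, ha, hb, hab⟩ := gfib_key s t hs ht k
    have hb0 : b ≠ 0 := by obtain ⟨c, hc⟩ := hb; omega
    have ha0 : a ≠ 0 := by obtain ⟨c, hc⟩ := ha; omega
    by_cases hg : gfib s t (2 * k) = 0
    · have : s * (k : ℤ) * a = 0 := by rw [← hab, hg, mul_zero]
      have hsk : s * (k : ℤ) = 0 := by
        rcases mul_eq_zero.mp this with h | h
        · exact h
        · exact absurd h ha0
      rw [hg, hsk]
    · have hsk : s * (k : ℤ) ≠ 0 := by
        intro h
        apply hg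
        have : b * gfib s t (2 * k) = 0 := by rw [hab, h, zero_mul]
        rcases mul_eq_zero.mp this with h' | h'
        · exact absurd h' hb0
        · exact h'
      have e1 : padicValInt 2 (b * gfib s t (2 * k))
          = padicValInt 2 b + padicValInt 2 (gfib s t (2 * k)) :=
        padicValInt.mul hb0 hg
      have e2 : padicValInt 2 (s * (k : ℤ) * a)
          = padicValInt 2 (s * k) + padicValInt 2 a :=
        padicValInt.mul hsk ha0
      have hbz : padicValInt 2 b = 0 := padicValInt.eq_zero_of_not_dvd (odd_not_two_dvd hb)
      have haz : padicValInt 2 a = 0 := padicValInt.eq_zero_of_not_dvd (odd_not_two_dvd ha)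
      have := e1.symm.trans (by rw [hab, e2])
      omega
  · intro hn
    obtain ⟨m, hm⟩ := hn
    have : n = 2 * m + 1 := by omega
    subst this
    exact padicValInt.eq_zero_of_not_dvd (odd_not_two_dvd (gfib_parity s t hs ht m).1)
end

section
/- Let s be even and t odd. Then ν₂({n}_{s,t}!) = ν₂(n!) + ⌊n/2⌋·ν₂(s/2), where {n}! = {1}{2}⋯{n}. -/
lemma gfib_two_add (s t : ℤ) (n : ℕ) :
    gfib s t (n + 2) = s * gfib s t (n + 1) + t * gfib s t n := rfl

lemma gluc_two_add (s t : ℤ) (n : ℕ) :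
    gluc s t (n + 2) = s * gluc s t (n + 1) + t * gluc s t n := rfl

lemma gfib_add_s14 (s t : ℤ) (a b : ℕ) : gfib s t (a + b + 1) =
    gfib s t (a+1) * gfib s t (b+1) + t * gfib s t a * gfib s t b := by
  induction a using Nat.strong_induction_on with
  | _ a ih =>
    match a with
    | 0 => simp [gfib]
    | 1 => rw [show 1+b+1 = b+2 by omega, gfib_two_add]
           simp [gfib, gfib_two_add]
           try ring
    | a+2 =>
      have h1 := ih (a+1) (by omega)
      have h2 := ih a (by omega)
      rw [show a+2+b+1 = (a+b+1)+2 by ring, gfib_two_add,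
        show a+b+1+1 = (a+1)+b+1 by ring, h1, h2,
        gfib_two_add s t (a+1), gfib_two_add s t a]
      ring

lemma gluc_eq (s t : ℤ) (m : ℕ) :
    gluc s t (m + 1) = gfib s t (m + 2) + t * gfib s t m := by
  induction m using Nat.strong_induction_on with
  | _ m ih =>
    match m with
    | 0 => simp [gluc, gfib, gfib_two_add]
    | 1 => simp [gluc, gfib, gluc_two_add, gfib_two_add]; ring
    | m+2 =>
      have h1 := ih (m+1) (by omega)
      have h2 := ih m (by omega)
      rw [show m+2+1 = (m+1)+2 by ring, gluc_two_add, h1, h2,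
        show m+2+2 = (m+2)+2 by ring, gfib_two_add s t (m+2), gfib_two_add s t (m+1),
        gfib_two_add s t m]
      ring

lemma gfib_double (s t : ℤ) (m : ℕ) :
    gfib s t (2 * (m + 1)) = gfib s t (m + 1) * gluc s t (m + 1) := by
  rw [show 2*(m+1) = m + (m+1) + 1 by ring, gfib_add_s14, gluc_eq,
    show m+1+1 = m+2 by ring]
  ring

lemma gfib_odd_odd (s t : ℤ) (hs : Even s) (ht : Odd t) (k : ℕ) :
    Odd (gfib s t (2 * k + 1)) := by
  induction k with
  | zero => simp [gfib]
  | succ k ih =>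
    rw [show 2*(k+1)+1 = (2*k+1)+2 by ring, gfib_two_add]
    exact (hs.mul_right _).add_odd (ht.mul ih)

lemma gluc_even (s t : ℤ) (hs : Even s) (m : ℕ) : Even (gluc s t m) := by
  induction m using Nat.strong_induction_on with
  | _ m ih =>
    match m with
    | 0 => exact ⟨1, rfl⟩
    | 1 => exact hs
    | m+2 =>
      rw [gluc_two_add]
      exact (hs.mul_right _).add ((ih m (by omega)).mul_left t)

lemma gluc_even_idx (s t : ℤ) (hs : Even s) (ht : Odd t) (k : ℕ) :
    ∃ d : ℤ, Odd d ∧ gluc s t (2 * k) = 2 * d := by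
  induction k with
  | zero => exact ⟨1, odd_one, rfl⟩
  | succ k ih =>
    obtain ⟨d, hd, hgd⟩ := ih
    obtain ⟨e, he⟩ := gluc_even s t hs (2*k+1)
    obtain ⟨σ, hσ⟩ := hs
    refine ⟨2*σ*e + t*d, Even.add_odd ⟨σ*e, by ring⟩ (ht.mul hd), ?_⟩
    rw [show 2*(k+1) = (2*k)+2 by ring, gluc_two_add, hgd, he, hσ]
    ring

lemma gluc_odd_idx (s t : ℤ) (hs : Even s) (ht : Odd t) (k : ℕ) :
    ∃ c : ℤ, Odd c ∧ gluc s t (2 * k + 1) = s * c := by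
  induction k with
  | zero => exact ⟨1, odd_one, (mul_one s).symm⟩
  | succ k ih =>
    obtain ⟨c, hc, hgc⟩ := ih
    obtain ⟨e, he⟩ := gluc_even s t hs (2*k+2)
    refine ⟨2*e + t*c, Even.add_odd ⟨e, by ring⟩ (ht.mul hc), ?_⟩
    rw [show 2*(k+1)+1 = (2*k+1)+2 by ring, gluc_two_add,
      show 2*k+1+1 = 2*k+2 by ring, hgc, he]
    ring

lemma odd_ne_zero {z : ℤ} (h : Odd z) : z ≠ 0 := by
  rcases h with ⟨m, rfl⟩; omega

lemma padicValInt_odd {z : ℤ} (h : Odd z) : padicValInt 2 z = 0 := by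
  apply padicValInt.eq_zero_of_not_dvd
  rcases h with ⟨m, rfl⟩
  omega

lemma pv2_two : padicValInt 2 (2 : ℤ) = 1 := by
  rw [show (2:ℤ) = ((2:ℕ):ℤ) by norm_num, padicValInt.of_nat, padicValNat.self one_lt_two]

lemma padicValInt_s (s : ℤ) (hs : Even s) (hs0 : s ≠ 0) :
    padicValInt 2 s = 1 + padicValInt 2 (s / 2) := by
  obtain ⟨σ, rfl⟩ := hs
  have hσ : σ ≠ 0 := by intro h; simp [h] at hs0
  have h2 : σ + σ = 2 * σ := by ring
  have hd : (2 * σ) / 2 = σ := Int.mul_ediv_cancel_left σ two_ne_zero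
  rw [h2, hd, padicValInt.mul (by norm_num) hσ, pv2_two]

lemma padicValNat_two_mul (m : ℕ) (hm : m ≠ 0) :
    padicValNat 2 (2 * m) = 1 + padicValNat 2 m := by
  rw [padicValNat.mul (by norm_num) hm, padicValNat.self (by norm_num)]

lemma gfib_key_s14 (s t : ℤ) (hs : Even s) (hs0 : s ≠ 0) (ht : Odd t) :
    ∀ m, 1 ≤ m → gfib s t (2 * m) ≠ 0 ∧
      padicValInt 2 (gfib s t (2 * m)) = padicValNat 2 (2 * m) + padicValInt 2 (s / 2) := by
  intro m hm
  induction m using Nat.strong_induction_on with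
  | _ m ih =>
    obtain ⟨j, rfl⟩ : ∃ j, m = j + 1 := ⟨m - 1, by omega⟩
    rw [gfib_double]
    rcases Nat.even_or_odd (j + 1) with ⟨k, hk⟩ | ⟨k, hk⟩
    · -- j+1 = 2k even, k ≥ 1
      have hk1 : 1 ≤ k := by omega
      have hkj : j + 1 = 2 * k := by omega
      obtain ⟨hF0, hFv⟩ := ih k (by omega) hk1
      obtain ⟨d, hd, hgd⟩ := gluc_even_idx s t hs ht k
      rw [hkj, hgd]
      have hd0 : (2 : ℤ) * d ≠ 0 := by
        have := odd_ne_zero hd; intro h; omega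
      constructor
      · exact mul_ne_zero hF0 hd0
      · rw [padicValInt.mul hF0 hd0, hFv,
          padicValInt.mul (by norm_num) (odd_ne_zero hd), pv2_two,
          padicValInt_odd hd]
        rw [show 2 * (2 * k) = 2 * ((2 * k)) from rfl, padicValNat_two_mul (2*k) (by omega)]
        omega
    · -- j+1 = 2k+1 odd
      have hkj : j + 1 = 2 * k + 1 := by omega
      obtain ⟨c, hc, hgc⟩ := gluc_odd_idx s t hs ht k
      have hF : Odd (gfib s t (2 * k + 1)) := gfib_odd_odd s t hs ht k
      rw [hkj, hgc]
      have hsc0 : s * c ≠ 0 := mul_ne_zero hs0 (odd_ne_zero hc)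
      constructor
      · exact mul_ne_zero (odd_ne_zero hF) hsc0
      · rw [padicValInt.mul (odd_ne_zero hF) hsc0, padicValInt.mul hs0 (odd_ne_zero hc),
          padicValInt_odd hF, padicValInt_odd hc,
          padicValInt_s s hs hs0, padicValNat_two_mul (2*k+1) (by omega),
          padicValNat.eq_zero_of_not_dvd (by omega)]
        omega

lemma gfib_ne_zero (s t : ℤ) (hs : Even s) (hs0 : s ≠ 0) (ht : Odd t) (n : ℕ) (hn : 1 ≤ n) :
    gfib s t n ≠ 0 := by
  rcases Nat.even_or_odd n with ⟨k, hk⟩ | ⟨k, hk⟩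
  · have : n = 2 * k := by omega
    rw [this]
    exact (gfib_key_s14 s t hs hs0 ht k (by omega)).1
  · have : n = 2 * k + 1 := by omega
    rw [this]
    exact odd_ne_zero (gfib_odd_odd s t hs ht k)

theorem stmt14 (s t : ℤ) (hs : Even s) (hs0 : s ≠ 0) (ht : Odd t) (n : ℕ) :
    padicValInt 2 (∏ i ∈ Finset.Icc 1 n, gfib s t i) =
      padicValNat 2 (Nat.factorial n) + (n / 2) * padicValInt 2 (s / 2) := by
  induction n with
  | zero => simp [Nat.factorial]
  | succ n ih =>
    have hprod0 : (∏ i ∈ Finset.Icc 1 n, gfib s t i) ≠ 0 := by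
      rw [Finset.prod_ne_zero_iff]
      intro i hi
      exact gfib_ne_zero s t hs hs0 ht i (Finset.mem_Icc.mp hi).1
    have hnew0 : gfib s t (n + 1) ≠ 0 := gfib_ne_zero s t hs hs0 ht (n+1) (by omega)
    rw [Finset.prod_Icc_succ_top (by omega), padicValInt.mul hprod0 hnew0, ih,
      Nat.factorial_succ, padicValNat.mul (by omega) (Nat.factorial_ne_zero n)]
    rcases Nat.even_or_odd (n + 1) with ⟨k, hk⟩ | ⟨k, hk⟩
    · -- n+1 = 2k
      have hkn : n + 1 = 2 * k := by omega
      obtain ⟨k', rfl⟩ : ∃ k', k = k' + 1 := ⟨k - 1, by omega⟩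
      have := (gfib_key_s14 s t hs hs0 ht (k'+1) (by omega)).2
      rw [hkn, this, padicValNat_two_mul (k'+1) (by omega),
        show (2 * (k'+1)) / 2 = k' + 1 by omega, show n / 2 = k' by omega]
      ring
    · -- n+1 = 2k+1
      have hkn : n + 1 = 2 * k + 1 := by omega
      have hodd : Odd (gfib s t (n+1)) := by rw [hkn]; exact gfib_odd_odd s t hs ht k
      rw [padicValInt_odd hodd, hkn,
        padicValNat.eq_zero_of_not_dvd (show ¬ 2 ∣ 2 * k + 1 by omega),
        show (2 * k + 1) / 2 = k by omega, show n / 2 = k by omega]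
      ring
end
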